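/- Exact chamber quantile formula: Fix α ∈ (0,1) and an admissible chamber Γ, with unique enumeration k^{(1)}, …, k^{(L)} of C_n strictly ordering the monomials on F_Γ, quantile index r = r_α(Γ) (the smallest r with Σ_{j=1}^r π_{k^{(j)}} ≥ α), and quantile count vector k_{α,Γ} := k^{(r)}. Then for every W ∈ cl(F_Γ) one has Q_{n,α}(W) = W^{k_{α,Γ}}; in particular, for W ∈ F_Γ, log Q_{n,α}(W) = Σ_{i=1}^m (k_{α,Γ})_i · log W_i. -/

import Mathlib

open Finset Filter Topology
open scoped Classical

noncomputable section

/-- The closed Arrow–Debreu wealth simplex `{W ∈ [0,∞)^m : Σ q_i W_i = 1}`. -/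
def closedSimplex {m : ℕ} (q : Fin m → ℝ) : Set (Fin m → ℝ) :=
  {W | (∀ i, 0 ≤ W i) ∧ ∑ i, q i * W i = 1}

/-- The open Arrow–Debreu wealth simplex `{W ∈ (0,∞)^m : Σ q_i W_i = 1}`. -/
def openSimplex {m : ℕ} (q : Fin m → ℝ) : Set (Fin m → ℝ) :=
  {W | (∀ i, 0 < W i) ∧ ∑ i, q i * W i = 1}

/-- The finite set `C_n` of count vectors `k : Fin m → ℕ` with `Σ k_i = n`. -/
def countFinset (m n : ℕ) : Finset (Fin m → ℕ) :=
  (Fintype.piFinset fun _ : Fin m => Finset.range (n + 1)).filter fun k => ∑ i, k i = n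

/-- The monomial `W^k := Π_i W_i^{k_i}` (with the convention `0^0 = 1`). -/
def mono {m : ℕ} (W : Fin m → ℝ) (k : Fin m → ℕ) : ℝ := ∏ i, W i ^ k i

/-- The multinomial probability `π_k = (n!/(k_1!⋯k_m!))·Π p_i^{k_i}`. -/
def countProb {m : ℕ} (p : Fin m → ℝ) (k : Fin m → ℕ) : ℝ :=
  (Nat.multinomial Finset.univ k : ℝ) * ∏ i, p i ^ k i

/-- The upper α-quantile of terminal wealth
`Q_{n,α}(W) := sup{t ∈ [0,∞) : Σ_{k ∈ C_n : W^k ≥ t} π_k ≥ α}`. -/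
def upperQuantile {m : ℕ} (p : Fin m → ℝ) (n : ℕ) (α : ℝ) (W : Fin m → ℝ) : ℝ :=
  sSup {t : ℝ | 0 ≤ t ∧
    α ≤ ∑ k ∈ countFinset m n, if t ≤ mono W k then countProb p k else 0}

/-- The union of the count hyperplanes `H_{k,ℓ}`. -/
def hyperUnion (m n : ℕ) : Set (Fin m → ℝ) :=
  {u | ∃ k ∈ countFinset m n, ∃ l ∈ countFinset m n,
    k ≠ l ∧ ∑ i, ((k i : ℝ) - (l i : ℝ)) * u i = 0}

/-- A chamber is a connected component of the complement of the count arrangement. -/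
def IsChamber (m n : ℕ) (Γ : Set (Fin m → ℝ)) : Prop :=
  ∃ u ∈ (hyperUnion m n)ᶜ, Γ = connectedComponentIn (hyperUnion m n)ᶜ u

/-- `F_Γ := {W ∈ W⁺⁺ : log W ∈ Γ}`. -/
def chamberFace {m : ℕ} (q : Fin m → ℝ) (Γ : Set (Fin m → ℝ)) : Set (Fin m → ℝ) :=
  {W | W ∈ openSimplex q ∧ (fun i => Real.log (W i)) ∈ Γ}

/-- `k` is the quantile count vector `k_{α,Γ}` of the chamber `Γ`: the tail mass at `W^k`
is at least `α`, while the strict tail mass is below `α`, for every `W ∈ F_Γ`. -/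
def IsQuantileVec {m : ℕ} (p q : Fin m → ℝ) (n : ℕ) (α : ℝ) (Γ : Set (Fin m → ℝ))
    (k : Fin m → ℕ) : Prop :=
  k ∈ countFinset m n ∧
  ∀ W ∈ chamberFace q Γ,
    α ≤ (∑ l ∈ countFinset m n, if mono W k ≤ mono W l then countProb p l else 0) ∧
    (∑ l ∈ countFinset m n, if mono W k < mono W l then countProb p l else 0) < α

/-- **Exact chamber quantile formula.** Given the unique enumeration `σ` of `C_n`
strictly ordering the monomials on `F_Γ`, and the minimal index `r` whose cumulative
probability reaches `α`, the upper `α`-quantile equals the monomial `W^{σ r}` on the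
closure of `F_Γ`; in log coordinates it is linear on `F_Γ`. -/
theorem chamber_quantile_formula (m n : ℕ) (hm : 2 ≤ m) (hn : 1 ≤ n)
    (p q : Fin m → ℝ) (hp : ∀ i, 0 < p i ∧ p i < 1) (hpsum : ∑ i, p i = 1)
    (hq : ∀ i, 0 < q i) (α : ℝ) (hα : 0 < α ∧ α < 1)
    (Γ : Set (Fin m → ℝ)) (hΓ : IsChamber m n Γ)
    (hadm : (chamberFace q Γ).Nonempty)
    (σ : Fin (countFinset m n).card → (Fin m → ℕ))
    (hmem : ∀ j, σ j ∈ countFinset m n) (hinj : Function.Injective σ)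
    (hstrict : ∀ W ∈ chamberFace q Γ, ∀ j j' : Fin (countFinset m n).card,
      j < j' → mono W (σ j') < mono W (σ j))
    (hweak : ∀ W ∈ closure (chamberFace q Γ), ∀ j j' : Fin (countFinset m n).card,
      j ≤ j' → mono W (σ j') ≤ mono W (σ j))
    (r : Fin (countFinset m n).card)
    (hr : α ≤ ∑ j ∈ Finset.Iic r, countProb p (σ j))
    (hrmin : ∀ r' : Fin (countFinset m n).card, r' < r →
      ∑ j ∈ Finset.Iic r', countProb p (σ j) < α) :
    (∀ W ∈ closure (chamberFace q Γ), upperQuantile p n α W = mono W (σ r)) ∧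
    (∀ W ∈ chamberFace q Γ,
      Real.log (upperQuantile p n α W) = ∑ i, (σ r i : ℝ) * Real.log (W i)) := by
  classical
  have hπpos : ∀ k, 0 < countProb p k := by
    intro k
    have h1 : (0:ℝ) < (Nat.multinomial Finset.univ k : ℝ) := by
      exact_mod_cast Nat.multinomial_pos _ _
    have h2 : (0:ℝ) < ∏ i, p i ^ k i :=
      Finset.prod_pos fun i _ => pow_pos (hp i).1 _
    exact mul_pos h1 h2
  have himg : Finset.univ.image σ = countFinset m n := by
    apply Finset.eq_of_subset_of_card_le
    · intro k hk
      obtain ⟨j, _, rfl⟩ := Finset.mem_image.mp hk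
      exact hmem j
    · rw [Finset.card_image_of_injective _ hinj, Finset.card_univ, Fintype.card_fin]
  have hsum : ∀ (f : (Fin m → ℕ) → ℝ),
      ∑ j, f (σ j) = ∑ k ∈ countFinset m n, f k := by
    intro f
    rw [← Finset.sum_image (fun a _ b _ h => hinj h), himg]
  have key : ∀ W ∈ closure (chamberFace q Γ), upperQuantile p n α W = mono W (σ r) := by
    intro W hW
    have hWnn : ∀ i, 0 ≤ W i := by
      intro i
      have hcl : closure (chamberFace q Γ) ⊆ {x : Fin m → ℝ | 0 ≤ x i} := by
        apply closure_minimal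
        · intro x hx; exact (hx.1.1 i).le
        · exact isClosed_le continuous_const (continuous_apply i)
      exact hcl hW
    have hmono_nn : ∀ k, 0 ≤ mono W k := fun k =>
      Finset.prod_nonneg fun i _ => pow_nonneg (hWnn i) _
    set S : Set ℝ := {t : ℝ | 0 ≤ t ∧
      α ≤ ∑ k ∈ countFinset m n, if t ≤ mono W k then countProb p k else 0} with hS
    -- membership of mono W (σ r)
    have hmemS : mono W (σ r) ∈ S := by
      refine ⟨hmono_nn _, ?_⟩
      rw [← hsum]
      calc α ≤ ∑ j ∈ Finset.Iic r, countProb p (σ j) := hr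
        _ = ∑ j ∈ Finset.Iic r,
              (if mono W (σ r) ≤ mono W (σ j) then countProb p (σ j) else 0) := by
            apply Finset.sum_congr rfl
            intro j hj
            rw [if_pos (hweak W hW j r (Finset.mem_Iic.mp hj))]
        _ ≤ ∑ j, (if mono W (σ r) ≤ mono W (σ j) then countProb p (σ j) else 0) := by
            apply Finset.sum_le_sum_of_subset_of_nonneg (Finset.subset_univ _)
            intro j _ _
            split <;> [exact (hπpos _).le; exact le_rfl]
    -- upper bound on S
    have hub : ∀ t ∈ S, t ≤ mono W (σ r) := by
      intro t ht
      by_contra hlt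
      push_neg at hlt
      have htail : (∑ k ∈ countFinset m n, if t ≤ mono W k then countProb p k else 0)
          < α := by
        rw [← hsum]
        have hzero : ∀ j, r ≤ j →
            (if t ≤ mono W (σ j) then countProb p (σ j) else 0) = 0 := by
          intro j hj
          rw [if_neg]
          push_neg
          exact lt_of_le_of_lt (hweak W hW r j hj) hlt
        have hsplit : ∑ j, (if t ≤ mono W (σ j) then countProb p (σ j) else 0)
            = ∑ j ∈ Finset.Iio r, (if t ≤ mono W (σ j) then countProb p (σ j) else 0) := by
          rw [← Finset.sum_subset (Finset.subset_univ (Finset.Iio r))]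
          intro j _ hj
          exact hzero j (not_lt.mp (by simpa using hj))
        rw [hsplit]
        have hle : ∑ j ∈ Finset.Iio r, (if t ≤ mono W (σ j) then countProb p (σ j) else 0)
            ≤ ∑ j ∈ Finset.Iio r, countProb p (σ j) := by
          apply Finset.sum_le_sum
          intro j _
          split <;> [exact le_rfl; exact (hπpos _).le]
        refine lt_of_le_of_lt hle ?_
        rcases Nat.eq_zero_or_pos r.val with h0 | hpos
        · have : Finset.Iio r = ∅ := by
            ext j
            simp [Fin.lt_def, h0]
          rw [this, Finset.sum_empty]
          exact hα.1
        · set r' : Fin (countFinset m n).card := ⟨r.val - 1, by omega⟩ with hr'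
          have hIio : Finset.Iio r = Finset.Iic r' := by
            ext j
            simp only [Finset.mem_Iio, Finset.mem_Iic, Fin.lt_def, Fin.le_def, hr', Fin.val_mk]
            omega
          rw [hIio]
          exact hrmin r' (by simp [Fin.lt_def, hr']; omega)
      exact absurd ht.2 (not_le.mpr htail)
    have hne : S.Nonempty := ⟨_, hmemS⟩
    have hbdd : BddAbove S := ⟨_, hub⟩
    exact le_antisymm (csSup_le hne hub) (le_csSup hbdd hmemS)
  refine ⟨key, ?_⟩
  intro W hWF
  have hW : W ∈ closure (chamberFace q Γ) := subset_closure hWF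
  rw [key W hW]
  unfold mono
  rw [Real.log_prod (fun i _ => pow_ne_zero _ (hWF.1.1 i).ne')]
  apply Finset.sum_congr rfl
  intro i _
  rw [Real.log_pow]
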